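/- Fix a symmetric chain decomposition C of 2^[n] and a chain A_1 ⊊ A_2 ⊊ ... ⊊ A_k of subsets of [n] with |A_i| = a_i. The number of permutations π of [n] such that all of A_1,...,A_k lie on a single chain of the SCD π(C) equals a_1! · (a_2 - a_1)! · ... · (a_k - a_{k-1})! · (n - a_k)! · min{ C(n,a_1), C(n,a_k) }. -/

import Mathlib

def IsSymChain (n : ℕ) (C : Finset (Finset (Fin n))) : Prop :=
  IsChain (· ⊆ ·) (C : Set (Finset (Fin n))) ∧
    ∃ k, k ≤ n / 2 ∧ C.image Finset.card = Finset.Icc k (n - k)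

open Finset

/-- The equivalence between fiber-respecting equivalences and families of fiber equivalences. -/
def fiberwiseEquiv {α β ι : Type*} (c : α → ι) (c' : β → ι) :
    {e : α ≃ β // ∀ x, c' (e x) = c x} ≃ ∀ i, {x // c x = i} ≃ {y // c' y = i} where
  toFun e i :=
    { toFun := fun x => ⟨e.1 x.1, by rw [e.2]; exact x.2⟩
      invFun := fun y => ⟨e.1.symm y.1, by
        rw [← e.2 (e.1.symm y.1), e.1.apply_symm_apply]; exact y.2⟩
      left_inv := fun x => by simp
      right_inv := fun y => by simp }
  invFun f := ⟨(Equiv.sigmaFiberEquiv c).symm.trans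
      ((Equiv.sigmaCongrRight f).trans (Equiv.sigmaFiberEquiv c')), by
    intro x
    exact (f (c x) ⟨x, rfl⟩).2⟩
  left_inv e := by
    apply Subtype.ext; apply Equiv.ext; intro x; rfl
  right_inv f := by
    funext i; apply Equiv.ext; intro x
    apply Subtype.ext
    obtain ⟨x, rfl⟩ := x
    rfl

lemma card_fiberwise_equivs {α β ι : Type*} [Fintype α] [Fintype β] [Fintype ι]
    [DecidableEq α] [DecidableEq β] [DecidableEq ι] (c : α → ι) (c' : β → ι)
    (h : ∀ i, Fintype.card {x // c x = i} = Fintype.card {y // c' y = i}) :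
    Nat.card {e : α ≃ β // ∀ x, c' (e x) = c x} =
      ∏ i : ι, (Fintype.card {x // c x = i}).factorial := by
  rw [Nat.card_congr (fiberwiseEquiv c c'), Nat.card_eq_fintype_card, Fintype.card_pi]
  congr 1; funext i
  rcases Fintype.card_eq.mp (h i) with ⟨e⟩
  rw [Fintype.card_equiv e, h i]

lemma initial_seg_eq_range (s : Finset ℕ)
    (hdc : ∀ i j, i ≤ j → j ∈ s → i ∈ s) : s = range s.card := by
  ext j
  simp only [mem_range]
  constructor
  · intro hj
    have : range (j+1) ⊆ s := fun i hi => hdc i j (Nat.lt_succ_iff.mp (mem_range.mp hi)) hj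
    have := card_le_card this
    simpa using this
  · intro hj
    by_contra hns
    have : s ⊆ range j := fun i hi => mem_range.mpr (by
      by_contra hij
      exact hns (hdc j i (Nat.le_of_not_lt hij) hi))
    have := card_le_card this
    simp at this
    omega

lemma mem_image_equiv' {α β : Type*} [DecidableEq β] (e : α ≃ β) (s : Finset α) (x : β) :
    x ∈ s.image e ↔ e.symm x ∈ s := by
  simp only [Finset.mem_image]
  constructor
  · rintro ⟨a, ha, rfl⟩; simpa using ha
  · intro h; exact ⟨e.symm x, h, by simp⟩

section Flag
variable {n : ℕ}

/-- index of the first flag member containing `x` (`k` if none). -/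
def flagClass (k : ℕ) (B : ℕ → Finset (Fin n)) (x : Fin n) : ℕ :=
  ((range k).filter (fun i => x ∉ B i)).card

/-- the flag extended by `univ` above level `k`. -/
def flagExt (k : ℕ) (B : ℕ → Finset (Fin n)) (i : ℕ) : Finset (Fin n) :=
  if i < k then B i else univ

lemma flagClass_le (k : ℕ) (B : ℕ → Finset (Fin n)) (x : Fin n) :
    flagClass k B x ≤ k := by
  simpa [flagClass] using card_le_card (filter_subset _ (range k))

variable {k : ℕ} {B : ℕ → Finset (Fin n)}
  (hB : ∀ i j, i ≤ j → j < k → B i ⊆ B j)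

include hB

lemma flag_filter_eq_range (x : Fin n) :
    (range k).filter (fun i => x ∉ B i) = range (flagClass k B x) := by
  apply initial_seg_eq_range
  intro i j hij hj
  simp only [mem_filter, mem_range] at hj ⊢
  exact ⟨lt_of_le_of_lt hij hj.1, fun hx => hj.2 (hB i j hij hj.1 hx)⟩

lemma mem_flagExt_iff (x : Fin n) (i : ℕ) :
    x ∈ flagExt k B i ↔ flagClass k B x ≤ i := by
  unfold flagExt
  split_ifs with h
  · have : x ∈ B i ↔ i ∉ (range k).filter (fun j => x ∉ B j) := by
      simp [mem_filter, h]
    rw [this, flag_filter_eq_range hB, mem_range]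
    omega
  · simp only [Finset.mem_univ, true_iff]
    exact le_trans (flagClass_le k B x) (Nat.le_of_not_lt h)

lemma flagExt_mono {i j : ℕ} (hij : i ≤ j) : flagExt k B i ⊆ flagExt k B j := by
  intro x hx
  rw [mem_flagExt_iff hB] at hx ⊢
  omega

lemma flag_fiber_zero (hk : 1 ≤ k) :
    univ.filter (fun x => flagClass k B x = 0) = B 0 := by
  ext x
  have h0 : x ∈ flagExt k B 0 ↔ flagClass k B x ≤ 0 := mem_flagExt_iff hB x 0
  simp only [flagExt, hk, if_pos (by omega : (0:ℕ) < k)] at h0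
  simp only [mem_filter, Finset.mem_univ, true_and, h0]
  omega

lemma flag_fiber_succ (i : ℕ) :
    univ.filter (fun x => flagClass k B x = i + 1) =
      flagExt k B (i+1) \ flagExt k B i := by
  ext x
  simp only [mem_filter, Finset.mem_univ, true_and, mem_sdiff,
    mem_flagExt_iff hB]
  omega

lemma flag_fiber_card_zero (hk : 1 ≤ k) :
    (univ.filter (fun x => flagClass k B x = 0)).card = (B 0).card := by
  rw [flag_fiber_zero hB hk]

lemma flag_fiber_card_succ (i : ℕ) :
    (univ.filter (fun x => flagClass k B x = i + 1)).card =
      (flagExt k B (i+1)).card - (flagExt k B i).card := by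
  rw [flag_fiber_succ hB, card_sdiff_of_subset (flagExt_mono hB (Nat.le_succ i))]

end Flag

lemma flag_perm_count {n k : ℕ} (hk : 1 ≤ k) (B D : ℕ → Finset (Fin n))
    (hB : ∀ i j, i ≤ j → j < k → B i ⊆ B j)
    (hD : ∀ i j, i ≤ j → j < k → D i ⊆ D j)
    (hcard : ∀ i, i < k → (D i).card = (B i).card) :
    Nat.card {e : Fin n ≃ Fin n // ∀ i, i < k → (B i).image e = D i} =
      (B 0).card.factorial *
        (∏ i ∈ range (k - 1), ((B (i + 1)).card - (B i).card).factorial) *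
        (n - (B (k - 1)).card).factorial := by
  classical
  set cB : Fin n → Fin (k+1) := fun x => ⟨flagClass k B x, Nat.lt_succ_of_le (flagClass_le k B x)⟩ with hcB
  set cD : Fin n → Fin (k+1) := fun x => ⟨flagClass k D x, Nat.lt_succ_of_le (flagClass_le k D x)⟩ with hcD
  -- the condition on e is equivalent to fiberwise compatibility
  have key : ∀ e : Fin n ≃ Fin n,
      (∀ i, i < k → (B i).image e = D i) ↔ (∀ x, cD (e x) = cB x) := by
    intro e
    constructor
    · intro h x
      apply Fin.ext
      show flagClass k D (e x) = flagClass k B x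
      unfold flagClass
      congr 1
      apply filter_congr
      intro i hi
      rw [mem_range] at hi
      rw [← h i hi, mem_image_equiv', Equiv.symm_apply_apply]
    · intro h i hik
      ext y
      rw [mem_image_equiv']
      have h1 : e.symm y ∈ B i ↔ flagClass k B (e.symm y) ≤ i := by
        have := mem_flagExt_iff hB (e.symm y) i
        rwa [flagExt, if_pos hik] at this
      have h2 : y ∈ D i ↔ flagClass k D y ≤ i := by
        have := mem_flagExt_iff hD y i
        rwa [flagExt, if_pos hik] at this
      have h3 := h (e.symm y)
      rw [Equiv.apply_symm_apply] at h3
      have h4 : flagClass k D y = flagClass k B (e.symm y) := congrArg Fin.val h3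
      rw [h1, h2, h4]
  -- fiber cards
  have hfilter : ∀ (E : ℕ → Finset (Fin n)) (hE : ∀ x : Fin n, flagClass k E x ≤ k)
      (i : Fin (k+1)),
      Fintype.card {x : Fin n // (⟨flagClass k E x, Nat.lt_succ_of_le (hE x)⟩ : Fin (k+1)) = i}
        = (univ.filter (fun x => flagClass k E x = i.1)).card := by
    intro E hE i
    rw [Fintype.card_subtype]
    congr 1
    apply Finset.filter_congr
    intro x _
    simp [Fin.ext_iff]
  have hext : ∀ m, (flagExt k D m).card = (flagExt k B m).card := by
    intro m
    unfold flagExt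
    split_ifs with h
    · exact hcard m h
    · rfl
  have hfibnat : ∀ j : ℕ, (univ.filter (fun x => flagClass k D x = j)).card
      = (univ.filter (fun x => flagClass k B x = j)).card := by
    intro j
    cases j with
    | zero => rw [flag_fiber_card_zero hB hk, flag_fiber_card_zero hD hk, hcard 0 hk]
    | succ m => rw [flag_fiber_card_succ hB, flag_fiber_card_succ hD, hext, hext]
  have hfib : ∀ i : Fin (k+1), Fintype.card {x // cB x = i} = Fintype.card {x // cD x = i} := by
    intro i
    rw [hcB, hcD, hfilter B (flagClass_le k B), hfilter D (flagClass_le k D), hfibnat]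
  rw [Nat.card_congr (Equiv.subtypeEquivRight key), card_fiberwise_equivs cB cD hfib]
  -- compute the product
  have hprod : ∀ i : Fin (k+1), (Fintype.card {x // cB x = i}).factorial
      = (fun j => ((univ.filter (fun x => flagClass k B x = j)).card).factorial) i.1 := by
    intro i
    rw [hcB, hfilter B (flagClass_le k B)]
  have hstep : ∏ i : Fin (k+1), (Fintype.card {x // cB x = i}).factorial
      = ∏ j ∈ range (k+1), ((univ.filter (fun x => flagClass k B x = j)).card).factorial := by
    rw [← Fin.prod_univ_eq_prod_range]
    exact Finset.prod_congr rfl (fun i _ => hprod i)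
  rw [hstep]
  obtain ⟨m, rfl⟩ : ∃ m, k = m + 1 := ⟨k - 1, by omega⟩
  rw [Finset.prod_range_succ', Finset.prod_range_succ]
  simp only [Nat.add_sub_cancel]
  rw [flag_fiber_card_zero hB hk]
  have hlast : (univ.filter (fun x => flagClass (m+1) B x = m + 1)).card
      = n - (B m).card := by
    rw [flag_fiber_card_succ hB]
    unfold flagExt
    rw [if_neg (by omega), if_pos (by omega)]
    simp
  rw [hlast]
  have hmid : ∀ j ∈ range m, ((univ.filter (fun x => flagClass (m+1) B x = j + 1)).card).factorial
      = ((B (j+1)).card - (B j).card).factorial := by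
    intro j hj
    rw [mem_range] at hj
    rw [flag_fiber_card_succ hB]
    unfold flagExt
    rw [if_pos (by omega), if_pos (by omega)]
  rw [Finset.prod_congr rfl hmid]
  ring

lemma choose_mono_half {n : ℕ} : ∀ (d a : ℕ), a + d ≤ n / 2 → n.choose a ≤ n.choose (a + d) := by
  intro d
  induction d with
  | zero => intro a _; exact le_refl _
  | succ m ih =>
    intro a h
    have h1 : n.choose a ≤ n.choose (a + m) := ih a (by omega)
    have h2 : n.choose (a + m) ≤ n.choose (a + m + 1) :=
      Nat.choose_le_succ_of_lt_half_left (by omega)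
    exact le_trans h1 h2

lemma choose_unimodal {n r s : ℕ} (hrs : r ≤ s) (hs : s ≤ n - r) (hrn : r ≤ n) :
    n.choose r ≤ n.choose s := by
  have hsn : s ≤ n := le_trans hs (Nat.sub_le n r)
  rcases le_or_gt s (n / 2) with h | h
  · have := choose_mono_half (n := n) (s - r) r (by omega)
    rwa [Nat.add_sub_cancel' hrs] at this
  · rw [← Nat.choose_symm hsn]
    have h2 : n - s ≤ n / 2 := by omega
    have h3 : r ≤ n - s := by omega
    have := choose_mono_half (n := n) ((n - s) - r) r (by omega)
    rwa [Nat.add_sub_cancel' h3] at this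

section SCD
variable {n : ℕ} {𝒞 : Finset (Finset (Finset (Fin n)))}
  (hpart : ∀ A : Finset (Fin n), ∃! C, C ∈ 𝒞 ∧ A ∈ C)
  (hsym : ∀ C ∈ 𝒞, IsSymChain n C)

include hsym in
lemma scd_unique_of_card {C : Finset (Finset (Fin n))} (hC : C ∈ 𝒞)
    {S S' : Finset (Fin n)} (hS : S ∈ C) (hS' : S' ∈ C) (h : S.card = S'.card) :
    S = S' := by
  rcases eq_or_ne S S' with rfl | hne
  · rfl
  rcases (hsym C hC).1 (by exact hS) (by exact hS') hne with hsub | hsub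
  · exact Finset.eq_of_subset_of_card_le hsub (le_of_eq h.symm)
  · exact (Finset.eq_of_subset_of_card_le hsub (le_of_eq h)).symm

include hsym in
lemma scd_exists_unique_card {C : Finset (Finset (Fin n))} (hC : C ∈ 𝒞) {s : ℕ}
    (h : ∃ S ∈ C, S.card = s) : ∃! S, S ∈ C ∧ S.card = s := by
  obtain ⟨S, hS, hcard⟩ := h
  exact ⟨S, ⟨hS, hcard⟩, fun S' ⟨hS', hcard'⟩ =>
    scd_unique_of_card hsym hC hS' hS (by rw [hcard, hcard'])⟩

include hpart hsym in
lemma scd_card_filter_size {s : ℕ}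
    [DecidablePred fun C : Finset (Finset (Fin n)) => ∃ S ∈ C, S.card = s] :
    (𝒞.filter (fun C => ∃ S ∈ C, S.card = s)).card = n.choose s := by
  classical
  rw [show n.choose s = (Finset.powersetCard s (univ : Finset (Fin n))).card by
    rw [Finset.card_powersetCard, Finset.card_univ, Fintype.card_fin]]
  apply Finset.card_bij (fun C hC => C.choose (fun S => S.card = s)
    (scd_exists_unique_card hsym (mem_filter.mp hC).1 (mem_filter.mp hC).2))
  · intro C hC
    rw [Finset.mem_powersetCard_univ]
    exact Finset.choose_property (fun S => S.card = s) C _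
  · intro C1 h1 C2 h2 heq
    have m1 := Finset.choose_mem (fun S => S.card = s) C1
      (scd_exists_unique_card hsym (mem_filter.mp h1).1 (mem_filter.mp h1).2)
    have m2 := Finset.choose_mem (fun S => S.card = s) C2
      (scd_exists_unique_card hsym (mem_filter.mp h2).1 (mem_filter.mp h2).2)
    rw [heq] at m1
    obtain ⟨Cu, _, hu⟩ := hpart (C2.choose (fun S => S.card = s)
      (scd_exists_unique_card hsym (mem_filter.mp h2).1 (mem_filter.mp h2).2))
    rw [hu C1 ⟨(mem_filter.mp h1).1, m1⟩, hu C2 ⟨(mem_filter.mp h2).1, m2⟩]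
  · intro S hS
    rw [Finset.mem_powersetCard_univ] at hS
    obtain ⟨C, ⟨hC𝒞, hSC⟩, _⟩ := hpart S
    have hCf : C ∈ 𝒞.filter (fun C => ∃ S ∈ C, S.card = s) :=
      mem_filter.mpr ⟨hC𝒞, S, hSC, hS⟩
    refine ⟨C, hCf, ?_⟩
    have hu := scd_exists_unique_card hsym hC𝒞 ⟨S, hSC, hS⟩
    have hm := Finset.choose_mem (fun S => S.card = s) C hu
    have hp : (C.choose (fun S => S.card = s) hu).card = s :=
      Finset.choose_property (fun S => S.card = s) C hu
    exact scd_unique_of_card hsym hC𝒞 hm hSC (by rw [hp, hS])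

include hsym in
lemma scd_two_size_filter_left {s t : ℕ} (hst : s ≤ t) (h : s + t ≤ n)
    [DecidablePred fun C : Finset (Finset (Fin n)) =>
      (∃ S ∈ C, S.card = s) ∧ (∃ S ∈ C, S.card = t)]
    [DecidablePred fun C : Finset (Finset (Fin n)) => ∃ S ∈ C, S.card = s] :
    𝒞.filter (fun C => (∃ S ∈ C, S.card = s) ∧ (∃ S ∈ C, S.card = t)) =
      𝒞.filter (fun C => ∃ S ∈ C, S.card = s) := by
  ext C
  simp only [mem_filter, and_assoc]
  constructor
  · tauto
  · rintro ⟨hC, hs⟩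
    obtain ⟨_, j, hj, himg⟩ := hsym C hC
    have hmem : ∀ u, (∃ S ∈ C, S.card = u) ↔ u ∈ Finset.Icc j (n - j) := fun u => by
      rw [← himg]; exact Finset.mem_image.symm
    refine ⟨hC, hs, ?_⟩
    rw [hmem] at hs ⊢
    rw [Finset.mem_Icc] at hs ⊢
    omega

include hsym in
lemma scd_two_size_filter_right {s t : ℕ} (hst : s ≤ t) (h : n ≤ s + t) (ht : t ≤ n)
    [DecidablePred fun C : Finset (Finset (Fin n)) =>
      (∃ S ∈ C, S.card = s) ∧ (∃ S ∈ C, S.card = t)]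
    [DecidablePred fun C : Finset (Finset (Fin n)) => ∃ S ∈ C, S.card = t] :
    𝒞.filter (fun C => (∃ S ∈ C, S.card = s) ∧ (∃ S ∈ C, S.card = t)) =
      𝒞.filter (fun C => ∃ S ∈ C, S.card = t) := by
  ext C
  simp only [mem_filter, and_assoc]
  constructor
  · tauto
  · rintro ⟨hC, hs⟩
    obtain ⟨_, j, hj, himg⟩ := hsym C hC
    have hmem : ∀ u, (∃ S ∈ C, S.card = u) ↔ u ∈ Finset.Icc j (n - j) := fun u => by
      rw [← himg]; exact Finset.mem_image.symm
    rw [hmem] at hs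
    rw [Finset.mem_Icc] at hs
    refine ⟨hC, ?_, ?_⟩ <;> rw [hmem, Finset.mem_Icc] <;> omega

end SCD

/-- `Equiv.symm` as an equivalence of perms and equivs. -/
def symmEquiv (n : ℕ) : Equiv.Perm (Fin n) ≃ (Fin n ≃ Fin n) :=
  ⟨fun π => π.symm, fun e => e.symm, fun π => π.symm_symm, fun e => e.symm_symm⟩

/-- Counting lemma N(n, A₁, …, A_k): the number of permutations π such that the chain
A₁ ⊊ ⋯ ⊊ A_k lies on a single chain of the SCD π(𝒞). -/
theorem counting_lemma (n k : ℕ) (hk : 1 ≤ k)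
    (𝒞 : Finset (Finset (Finset (Fin n))))
    (hpart : ∀ A : Finset (Fin n), ∃! C, C ∈ 𝒞 ∧ A ∈ C)
    (hsym : ∀ C ∈ 𝒞, IsSymChain n C)
    (A : ℕ → Finset (Fin n))
    (hA : ∀ i j, i < j → j < k → A i ⊂ A j) :
    Set.ncard {π : Equiv.Perm (Fin n) |
        ∃ C ∈ 𝒞, ∀ i < k, A i ∈ C.image (fun S => S.image π)} =
      (A 0).card.factorial *
        (∏ i ∈ Finset.range (k - 1), ((A (i + 1)).card - (A i).card).factorial) *
        (n - (A (k - 1)).card).factorial *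
        min (n.choose (A 0).card) (n.choose (A (k - 1)).card) := by
  classical
  have hk0 : 0 < k := hk
  have hkk : k - 1 < k := by omega
  have hAmono : ∀ i j, i ≤ j → j < k → A i ⊆ A j := by
    intro i j hij hj
    rcases Nat.lt_or_ge i j with h | h
    · exact (hA i j h hj).subset
    · have : i = j := by omega
      subst this; exact subset_rfl
  have hAcard : ∀ i j, i ≤ j → j < k → (A i).card ≤ (A j).card :=
    fun i j hij hj => card_le_card (hAmono i j hij hj)
  have hAcards : ∀ i j, i < j → j < k → (A i).card < (A j).card :=
    fun i j hij hj => card_lt_card (hA i j hij hj)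
  have ha0k : (A 0).card ≤ (A (k-1)).card := hAcard 0 (k-1) (by omega) hkk
  have hakn : (A (k-1)).card ≤ n := by
    have := card_le_card (subset_univ (A (k-1)))
    simpa using this
  have hmemiff : ∀ (π : Equiv.Perm (Fin n)) (C : Finset (Finset (Fin n))) (i : ℕ),
      (A i ∈ C.image (fun S => S.image π) ↔ (A i).image π.symm ∈ C) := by
    intro π C i
    constructor
    · rw [Finset.mem_image]
      rintro ⟨S, hS, hSA⟩
      rw [← hSA, Finset.image_image,
        show ((π.symm : Fin n → Fin n) ∘ π) = id from funext (fun x => π.symm_apply_apply x),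
        Finset.image_id]
      exact hS
    · intro h
      rw [Finset.mem_image]
      refine ⟨(A i).image π.symm, h, ?_⟩
      rw [Finset.image_image,
        show ((π : Fin n → Fin n) ∘ π.symm) = id from funext (fun x => π.apply_symm_apply x),
        Finset.image_id]
  set P : Equiv.Perm (Fin n) → Prop :=
    fun π => ∃ C ∈ 𝒞, ∀ i : Fin k, (A i.1).image π.symm ∈ C with hPdef
  have hset : {π : Equiv.Perm (Fin n) |
      ∃ C ∈ 𝒞, ∀ i < k, A i ∈ C.image (fun S => S.image π)} = ↑(univ.filter P) := by
    ext π
    simp only [Set.mem_setOf_eq, coe_filter, mem_univ, true_and, hPdef]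
    constructor
    · rintro ⟨C, hC, h⟩
      exact ⟨C, hC, fun i => (hmemiff π C i.1).mp (h i.1 i.2)⟩
    · rintro ⟨C, hC, h⟩
      exact ⟨C, hC, fun i hi => (hmemiff π C i).mpr (h ⟨i, hi⟩)⟩
  rw [hset, Set.ncard_coe_finset]
  set T : Finset (Fin k → Finset (Fin n)) := univ.filter
    (fun D => (∃ C ∈ 𝒞, ∀ i, D i ∈ C) ∧ ∀ i : Fin k, (D i).card = (A i.1).card) with hTdef
  set f : Equiv.Perm (Fin n) → (Fin k → Finset (Fin n)) :=
    fun π i => (A i.1).image π.symm with hfdef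
  have hmaps : ∀ π ∈ univ.filter P, f π ∈ T := by
    intro π hπ
    rw [mem_filter] at hπ
    obtain ⟨-, C, hC, h⟩ := hπ
    rw [hTdef, mem_filter]
    exact ⟨mem_univ _, ⟨C, hC, fun i => h i⟩,
      fun i => Finset.card_image_of_injective _ π.symm.injective⟩
  rw [Finset.card_eq_sum_card_fiberwise hmaps]
  have hfiber : ∀ D ∈ T, ((univ.filter P).filter (fun π => f π = D)).card =
      (A 0).card.factorial *
        (∏ i ∈ Finset.range (k-1), ((A (i+1)).card - (A i).card).factorial) *
        (n - (A (k-1)).card).factorial := by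
    intro D hD
    rw [hTdef, mem_filter] at hD
    obtain ⟨-, ⟨C, hC𝒞, hDC⟩, hDcard⟩ := hD
    have hff : (univ.filter P).filter (fun π => f π = D) =
        univ.filter (fun π => f π = D) := by
      ext π
      simp only [mem_filter, mem_univ, true_and]
      constructor
      · tauto
      · intro h
        refine ⟨⟨C, hC𝒞, fun i => ?_⟩, h⟩
        have : f π i = D i := by rw [h]
        rw [hfdef] at this
        rw [show (A i.1).image π.symm = D i from this]
        exact hDC i
    rw [hff]
    set Dn : ℕ → Finset (Fin n) := fun i => if h : i < k then D ⟨i, h⟩ else univ with hDn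
    have hDmono : ∀ i j, i ≤ j → j < k → Dn i ⊆ Dn j := by
      intro i j hij hj
      rcases Nat.lt_or_ge i j with h | h
      · have hi : i < k := lt_trans h hj
        rw [hDn]
        simp only [dif_pos hj, dif_pos hi]
        have hcij : (D ⟨i, hi⟩).card < (D ⟨j, hj⟩).card := by
          rw [hDcard ⟨i, hi⟩, hDcard ⟨j, hj⟩]; exact hAcards i j h hj
        have hne : D ⟨i, hi⟩ ≠ D ⟨j, hj⟩ := fun e => by rw [e] at hcij; omega
        rcases (hsym C hC𝒞).1 (hDC ⟨i,hi⟩) (hDC ⟨j,hj⟩) hne with hsub | hsub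
        · exact hsub
        · exfalso; have := card_le_card hsub; omega
      · have : i = j := by omega
        subst this; exact subset_rfl
    have hDcard' : ∀ i, i < k → (Dn i).card = (A i).card := by
      intro i hi
      rw [hDn]
      simp only [dif_pos hi]
      exact hDcard ⟨i, hi⟩
    have hcond : ∀ π : Equiv.Perm (Fin n),
        f π = D ↔ ∀ i, i < k → (A i).image π.symm = Dn i := by
      intro π
      rw [funext_iff]
      constructor
      · intro h i hi
        rw [hDn]
        simp only [dif_pos hi]
        exact h ⟨i, hi⟩
      · intro h i
        have := h i.1 i.2
        rw [hDn] at this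
        simp only [dif_pos i.2] at this
        rw [hfdef]
        simpa using this
    have hNat : (univ.filter (fun π => f π = D)).card
        = Nat.card {e : Fin n ≃ Fin n // ∀ i, i < k → (A i).image e = Dn i} := by
      rw [Nat.card_eq_fintype_card, Fintype.card_subtype]
      apply Finset.card_bij (fun π _ => (symmEquiv n π : Fin n ≃ Fin n))
      · intro π hπ
        rw [mem_filter] at hπ ⊢
        exact ⟨mem_univ _, (hcond π).mp hπ.2⟩
      · intro π1 _ π2 _ h
        have : (π1.symm : Fin n ≃ Fin n) = π2.symm := h
        calc π1 = π1.symm.symm := (Equiv.symm_symm π1).symm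
        _ = π2.symm.symm := by rw [this]
        _ = π2 := Equiv.symm_symm π2
      · intro e he
        rw [mem_filter] at he
        refine ⟨e.symm, ?_, ?_⟩
        · rw [mem_filter]
          refine ⟨mem_univ _, (hcond e.symm).mpr ?_⟩
          simpa using he.2
        · simp [symmEquiv]
    rw [hNat, flag_perm_count hk A Dn hAmono hDmono (fun i hi => by rw [hDcard' i hi])]
  rw [Finset.sum_congr rfl hfiber, Finset.sum_const, smul_eq_mul]
  -- now compute T.card
  have hEU : ∀ C ∈ 𝒞.filter (fun C => (∃ S ∈ C, S.card = (A 0).card) ∧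
      (∃ S ∈ C, S.card = (A (k-1)).card)), ∀ i : Fin k,
      ∃! S, S ∈ C ∧ S.card = (A i.1).card := by
    intro C hC i
    rw [mem_filter] at hC
    obtain ⟨hC𝒞, h0, hk1⟩ := hC
    obtain ⟨_, j, hj, himg⟩ := hsym C hC𝒞
    have hmem : ∀ u, (∃ S ∈ C, S.card = u) ↔ u ∈ Finset.Icc j (n - j) := fun u => by
      rw [← himg]; exact Finset.mem_image.symm
    apply scd_exists_unique_card hsym hC𝒞
    rw [hmem] at h0 hk1 ⊢
    rw [Finset.mem_Icc] at h0 hk1 ⊢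
    have h1 : (A 0).card ≤ (A i.1).card := hAcard 0 i.1 (by omega) i.2
    have h2 : (A i.1).card ≤ (A (k-1)).card := hAcard i.1 (k-1) (by omega) hkk
    omega
  have hTcard : T.card = (𝒞.filter (fun C => (∃ S ∈ C, S.card = (A 0).card) ∧
      (∃ S ∈ C, S.card = (A (k-1)).card))).card := by
    symm
    apply Finset.card_bij (fun C hC => fun i : Fin k =>
      C.choose (fun S => S.card = (A i.1).card) (hEU C hC i))
    · intro C hC
      rw [hTdef, mem_filter]
      refine ⟨mem_univ _, ⟨C, (mem_filter.mp hC).1, fun i => Finset.choose_mem _ _ _⟩,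
        fun i => Finset.choose_property (fun S => S.card = (A i.1).card) C (hEU C hC i)⟩
    · intro C1 h1 C2 h2 heq
      have heq0 := congrFun heq ⟨0, hk0⟩
      have m1 := Finset.choose_mem (fun S => S.card = (A (0:ℕ)).card) C1 (hEU C1 h1 ⟨0, hk0⟩)
      have m2 := Finset.choose_mem (fun S => S.card = (A (0:ℕ)).card) C2 (hEU C2 h2 ⟨0, hk0⟩)
      rw [heq0] at m1
      obtain ⟨Cu, _, hu⟩ := hpart (C2.choose (fun S => S.card = (A (0:ℕ)).card) (hEU C2 h2 ⟨0, hk0⟩))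
      rw [hu C1 ⟨(mem_filter.mp h1).1, m1⟩, hu C2 ⟨(mem_filter.mp h2).1, m2⟩]
    · intro D hD
      rw [hTdef, mem_filter] at hD
      obtain ⟨-, ⟨C, hC𝒞, hDC⟩, hDcard⟩ := hD
      have hCf : C ∈ 𝒞.filter (fun C => (∃ S ∈ C, S.card = (A 0).card) ∧
          (∃ S ∈ C, S.card = (A (k-1)).card)) := by
        rw [mem_filter]
        exact ⟨hC𝒞, ⟨D ⟨0, hk0⟩, hDC _, hDcard ⟨0, hk0⟩⟩,
          ⟨D ⟨k-1, hkk⟩, hDC _, hDcard ⟨k-1, hkk⟩⟩⟩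
      refine ⟨C, hCf, ?_⟩
      funext i
      apply scd_unique_of_card hsym hC𝒞 (Finset.choose_mem _ _ _) (hDC i)
      rw [Finset.choose_property (fun S => S.card = (A i.1).card) C (hEU C hCf i), hDcard i]
  rcases le_or_gt ((A 0).card + (A (k-1)).card) n with hcase | hcase
  · rw [hTcard, scd_two_size_filter_left hsym ha0k hcase,
      scd_card_filter_size hpart hsym]
    rw [show min (n.choose (A 0).card) (n.choose (A (k-1)).card) = n.choose (A 0).card from
      min_eq_left (choose_unimodal ha0k (by omega) (by omega))]
    ring
  · rw [hTcard, scd_two_size_filter_right hsym ha0k (by omega) hakn,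
      scd_card_filter_size hpart hsym]
    have hsymm : n.choose (A (k-1)).card = n.choose (n - (A (k-1)).card) :=
      (Nat.choose_symm hakn).symm
    rw [show min (n.choose (A 0).card) (n.choose (A (k-1)).card) = n.choose (A (k-1)).card from
      min_eq_right (by
        rw [hsymm]
        exact choose_unimodal (by omega) (by omega) (by omega))]
    ring
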